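/- Let Y be a finite simple graph with vertex set {1,…,n}. The map sending a linear order π on the vertices to the acyclic orientation O_Y^π (orienting each edge {u,v} from the π-smaller to the π-larger endpoint) induces a bijection between the set of equivalence classes of permutations of the vertices under the relation generated by swapping adjacent entries that are non-adjacent in Y, and the set of acyclic orientations of Y. -/

import Mathlib

/-- An orientation of a simple graph: a choice of direction for each edge. -/
structure GraphOrientation {V : Type*} (G : SimpleGraph V) where
  dir : V → V → Prop
  consistent : ∀ u v, G.Adj u v ↔ (dir u v ∨ dir v u)
  asymm : ∀ u v, dir u v → ¬ dir v u

/-- An orientation is acyclic if its directed graph has no directed cycle. -/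
def GraphOrientation.IsAcyclic {V : Type*} {G : SimpleGraph V} (O : GraphOrientation G) : Prop :=
  ∀ v, ¬ Relation.TransGen O.dir v v

/-- The type of acyclic orientations of `G`. -/
def AcycGraphOrientation {V : Type*} (G : SimpleGraph V) := {O : GraphOrientation G // O.IsAcyclic}

/-- `Click O O'` holds when `O'` is obtained from `O` by a source-to-sink operation:
reversing all edges incident to some source vertex `v`. -/
def Click {V : Type*} {G : SimpleGraph V} (O O' : GraphOrientation G) : Prop :=
  ∃ v, (∀ u, ¬ O.dir u v) ∧
    ∀ u w, O'.dir u w ↔ (((u = v ∨ w = v) ∧ O.dir w u) ∨ (u ≠ v ∧ w ≠ v ∧ O.dir u w))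

/-- κ(G): the number of equivalence classes of acyclic orientations of `G` under the
equivalence generated by source-to-sink operations. -/
noncomputable def kappa {V : Type*} (G : SimpleGraph V) : ℕ :=
  Nat.card (Quot (fun A B : AcycGraphOrientation G => Click A.1 B.1))

/-- Two permutations are related if they differ by a transposition of two consecutive
entries that are non-adjacent in `G`. -/
def SwapRel {n : ℕ} (G : SimpleGraph (Fin n)) (π π' : Equiv.Perm (Fin n)) : Prop :=
  ∃ (k : Fin n) (h : (k : ℕ) + 1 < n),
    ¬ G.Adj (π k) (π ⟨(k : ℕ) + 1, h⟩) ∧ π' = π * Equiv.swap k ⟨(k : ℕ) + 1, h⟩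

namespace UpdateBij

variable {n : ℕ}

lemma swap_val {k k1 p : Fin n} :
    ((Equiv.swap k k1 p : Fin n) : ℕ) =
      if p = k then (k1:ℕ) else if p = k1 then (k:ℕ) else (p:ℕ) := by
  rcases eq_or_ne p k with h | h1
  · simp [h, Equiv.swap_apply_left]
  · rcases eq_or_ne p k1 with h | h2
    · rw [h, Equiv.swap_apply_right, if_neg (h ▸ h1), if_pos rfl]
    · simp [Equiv.swap_apply_of_ne_of_ne h1 h2, h1, h2]

lemma swap_lt_iff {k k1 : Fin n} (hk : (k:ℕ)+1 = (k1:ℕ)) {p q : Fin n}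
    (h1 : ¬(p = k ∧ q = k1)) (h2 : ¬(p = k1 ∧ q = k)) :
    Equiv.swap k k1 p < Equiv.swap k k1 q ↔ p < q := by
  rw [Fin.lt_def, Fin.lt_def, swap_val, swap_val]
  simp only [Fin.ext_iff] at h1 h2 ⊢
  split_ifs <;> omega

lemma orient_ext {V : Type*} {G : SimpleGraph V} {O O' : GraphOrientation G}
    (h : ∀ u v, O.dir u v ↔ O'.dir u v) : O = O' := by
  obtain ⟨d, c, a⟩ := O
  obtain ⟨d', c', a'⟩ := O'
  have hd : d = d' := by funext u v; exact propext (h u v)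
  subst hd
  rfl

/-- The acyclic orientation induced by a permutation. -/
def permO (G : SimpleGraph (Fin n)) (π : Equiv.Perm (Fin n)) : AcycGraphOrientation G := by
  refine ⟨⟨fun u v => G.Adj u v ∧ π.symm u < π.symm v, ?_, ?_⟩, ?_⟩
  · intro u v
    constructor
    · intro h
      rcases lt_or_gt_of_ne (fun he => G.ne_of_adj h (π.symm.injective he)) with hlt | hgt
      · exact Or.inl ⟨h, hlt⟩
      · exact Or.inr ⟨h.symm, hgt⟩
    · rintro (⟨h, _⟩ | ⟨h, _⟩)
      exacts [h, h.symm]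
  · rintro u v ⟨_, h⟩ ⟨_, h'⟩
    exact absurd h' (not_lt.2 h.le)
  · intro v hv
    have key : ∀ a b, Relation.TransGen (fun u v => G.Adj u v ∧ π.symm u < π.symm v) a b →
        π.symm a < π.symm b := by
      intro a b h
      induction h with
      | single h => exact h.2
      | tail _ h ih => exact ih.trans h.2
    exact lt_irrefl _ (key v v hv)

lemma mul_swap_symm (π : Equiv.Perm (Fin n)) (k k1 : Fin n) (w : Fin n) :
    (π * Equiv.swap k k1).symm w = Equiv.swap k k1 (π.symm w) := by
  simp [Equiv.Perm.mul_def, Equiv.symm_trans_apply]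

/-- key iff: swapping two consecutive non-adjacent entries preserves edge orientations. -/
lemma swap_dir_iff {G : SimpleGraph (Fin n)} {π : Equiv.Perm (Fin n)} {k : Fin n}
    (hk : (k:ℕ) + 1 < n) (hna : ¬ G.Adj (π k) (π ⟨(k:ℕ)+1, hk⟩))
    {u v : Fin n} (hadj : G.Adj u v) :
    (π * Equiv.swap k ⟨(k:ℕ)+1, hk⟩).symm u < (π * Equiv.swap k ⟨(k:ℕ)+1, hk⟩).symm v ↔
      π.symm u < π.symm v := by
  rw [mul_swap_symm, mul_swap_symm]
  refine swap_lt_iff rfl ?_ ?_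
  · rintro ⟨h1, h2⟩
    apply hna
    have e1 : π k = u := by rw [← h1, Equiv.apply_symm_apply]
    have e2 : π ⟨(k:ℕ)+1, hk⟩ = v := by rw [← h2, Equiv.apply_symm_apply]
    rw [e1, e2]; exact hadj
  · rintro ⟨h1, h2⟩
    apply hna
    have e1 : π ⟨(k:ℕ)+1, hk⟩ = u := by rw [← h1, Equiv.apply_symm_apply]
    have e2 : π k = v := by rw [← h2, Equiv.apply_symm_apply]
    rw [e1, e2]; exact hadj.symm

lemma permO_swap {G : SimpleGraph (Fin n)} {π π' : Equiv.Perm (Fin n)}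
    (h : SwapRel G π π') : permO G π' = permO G π := by
  obtain ⟨k, hk, hna, rfl⟩ := h
  apply Subtype.ext
  apply orient_ext
  intro u v
  exact and_congr_right fun hadj => swap_dir_iff hk hna hadj

/-- The number of ordered pairs on which the two permutations disagree about order. -/
noncomputable def inv (π π' : Equiv.Perm (Fin n)) : ℕ :=
  (Finset.univ.filter fun p : Fin n × Fin n =>
    π.symm p.1 < π.symm p.2 ∧ π'.symm p.2 < π'.symm p.1).card

lemma eq_of_inv_zero {π π' : Equiv.Perm (Fin n)} (h0 : inv π π' = 0) : π = π' := by
  have hempty := Finset.card_eq_zero.1 h0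
  have hmono : StrictMono (fun i => π'.symm (π i)) := by
    intro i j hij
    have hnot : ¬(π.symm (π i) < π.symm (π j) ∧ π'.symm (π j) < π'.symm (π i)) := by
      intro hc
      have hm : (π i, π j) ∈ (Finset.univ.filter fun p : Fin n × Fin n =>
          π.symm p.1 < π.symm p.2 ∧ π'.symm p.2 < π'.symm p.1) := by
        simp only [Finset.mem_filter, Finset.mem_univ, true_and]
        exact hc
      rw [hempty] at hm
      exact absurd hm (Finset.notMem_empty _)
    simp only [Equiv.symm_apply_apply] at hnot
    have hne : π'.symm (π i) ≠ π'.symm (π j) := fun h =>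
      absurd (π.injective (π'.symm.injective h)) hij.ne
    exact lt_of_le_of_ne (not_lt.1 (not_and.mp hnot hij)) hne
  have hsurj : Function.Surjective (fun i => π'.symm (π i)) := (π.trans π'.symm).surjective
  have hid : ∀ x, π'.symm (π x) = x := by
    intro x
    have he : StrictMono.orderIsoOfSurjective _ hmono hsurj = OrderIso.refl (Fin n) :=
      Subsingleton.elim _ _
    have h2 := congrArg (fun (e : Fin n ≃o Fin n) => e x) he
    simpa using h2
  exact Equiv.ext fun x => by
    have := congrArg π' (hid x)
    simpa using this

lemma exists_desc {f : Fin n → Fin n} (hinj : Function.Injective f)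
    {i j : Fin n} (hij : i < j) (hf : f j < f i) :
    ∃ (k : ℕ) (hk : k + 1 < n), f ⟨k+1, hk⟩ < f ⟨k, Nat.lt_of_succ_lt hk⟩ := by
  by_contra hcon
  push_neg at hcon
  have hstep : ∀ (k : ℕ) (hk : k + 1 < n), f ⟨k, Nat.lt_of_succ_lt hk⟩ < f ⟨k+1, hk⟩ := by
    intro k hk
    have hne : f ⟨k, Nat.lt_of_succ_lt hk⟩ ≠ f ⟨k+1, hk⟩ := fun h => by
      have := hinj h
      simp [Fin.ext_iff] at this
    exact lt_of_le_of_ne (hcon k hk) hne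
  have key : ∀ (d : ℕ) (a b : Fin n), (b:ℕ) = (a:ℕ) + d + 1 → f a < f b := by
    intro d
    induction d with
    | zero =>
      intro a b hb
      have hbn := b.isLt
      have hb1 : (a:ℕ) + 1 < n := by omega
      have ha : a = ⟨(a:ℕ), Nat.lt_of_succ_lt hb1⟩ := Fin.ext rfl
      have hb' : b = ⟨(a:ℕ)+1, hb1⟩ := Fin.ext (by show (b:ℕ) = (a:ℕ)+1; omega)
      have := hstep (a:ℕ) hb1
      rwa [← ha, ← hb'] at this
    | succ d ih =>
      intro a b hb
      have hbn := b.isLt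
      have hmid : ((a:ℕ) + d + 1) < n := by omega
      have h1 : f a < f ⟨(a:ℕ)+d+1, hmid⟩ := ih a ⟨(a:ℕ)+d+1, hmid⟩ rfl
      have hmid2 : ((a:ℕ) + d + 1) + 1 < n := by omega
      have h2 := hstep ((a:ℕ)+d+1) hmid2
      have hb' : b = ⟨(a:ℕ)+d+1+1, hmid2⟩ := Fin.ext (by show (b:ℕ) = (a:ℕ)+d+1+1; omega)
      rw [hb']
      exact h1.trans h2
  have hij' : (j:ℕ) = (i:ℕ) + ((j:ℕ) - (i:ℕ) - 1) + 1 := by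
    have := (Fin.lt_def).1 hij; omega
  exact absurd hf (not_lt.2 (key _ i j hij').le)

lemma step {G : SimpleGraph (Fin n)} {π π' : Equiv.Perm (Fin n)}
    (H : ∀ u v, G.Adj u v → (π.symm u < π.symm v ↔ π'.symm u < π'.symm v))
    (hne : inv π π' ≠ 0) :
    ∃ π₂, SwapRel G π π₂ ∧ inv π₂ π' < inv π π' ∧
      (∀ u v, G.Adj u v → (π₂.symm u < π₂.symm v ↔ π'.symm u < π'.symm v)) := by
  classical
  obtain ⟨⟨u, v⟩, hm⟩ := Finset.card_ne_zero.1 hne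
  simp only [Finset.mem_filter, Finset.mem_univ, true_and] at hm
  obtain ⟨huv, hvu⟩ := hm
  -- find an adjacent descent of f := π'.symm ∘ π
  have hfinj : Function.Injective (fun i => π'.symm (π i)) := (π.trans π'.symm).injective
  have hdesc := exists_desc hfinj (i := π.symm u) (j := π.symm v) huv
    (by simpa using hvu)
  obtain ⟨k, hk, hkdesc⟩ := hdesc
  set kf : Fin n := ⟨k, Nat.lt_of_succ_lt hk⟩ with hkf
  set k1 : Fin n := ⟨k+1, hk⟩ with hk1
  set a : Fin n := π kf with hadef
  set b : Fin n := π k1 with hbdef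
  have hba : π'.symm b < π'.symm a := hkdesc
  have hsa : π.symm a = kf := Equiv.symm_apply_apply _ _
  have hsb : π.symm b = k1 := Equiv.symm_apply_apply _ _
  have hkk1 : kf < k1 := by rw [Fin.lt_def]; exact Nat.lt_succ_self k
  have hnadj : ¬ G.Adj a b := by
    intro hadj
    have := (H a b hadj).1 (by rw [hsa, hsb]; exact hkk1)
    exact absurd this (not_lt.2 hba.le)
  have hkval : (kf:ℕ) + 1 < n := hk
  refine ⟨π * Equiv.swap kf k1, ⟨kf, hkval, ?_, ?_⟩, ?_, ?_⟩
  · show ¬ G.Adj (π kf) (π ⟨(kf:ℕ)+1, hkval⟩)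
    exact hnadj
  · rfl
  · -- inversion count decreases
    apply Finset.card_lt_card
    constructor
    · intro p hp
      simp only [Finset.mem_filter, Finset.mem_univ, true_and] at hp ⊢
      obtain ⟨hp1, hp2⟩ := hp
      refine ⟨?_, hp2⟩
      rw [mul_swap_symm, mul_swap_symm] at hp1
      by_cases hc1 : π.symm p.1 = kf ∧ π.symm p.2 = k1
      · -- p = (a, b): but then hp1 is false
        exfalso
        rw [hc1.1, hc1.2, Equiv.swap_apply_left, Equiv.swap_apply_right] at hp1
        exact absurd hp1 (not_lt.2 hkk1.le)
      by_cases hc2 : π.symm p.1 = k1 ∧ π.symm p.2 = kf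
      · -- p = (b, a): then hp2 is false
        exfalso
        have hpa : p.1 = b := by
          have := congrArg π hc2.1
          simpa using this
        have hpb : p.2 = a := by
          have := congrArg π hc2.2
          simpa using this
        rw [hpa, hpb] at hp2
        exact absurd hp2 (not_lt.2 hba.le)
      · exact (swap_lt_iff rfl hc1 hc2).1 hp1
    · intro hsub
      have hab : (a, b) ∈ (Finset.univ.filter fun p : Fin n × Fin n =>
          π.symm p.1 < π.symm p.2 ∧ π'.symm p.2 < π'.symm p.1) := by
        simp only [Finset.mem_filter, Finset.mem_univ, true_and]
        exact ⟨by rw [hsa, hsb]; exact hkk1, hba⟩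
      have := hsub hab
      simp only [Finset.mem_filter, Finset.mem_univ, true_and] at this
      obtain ⟨h1, _⟩ := this
      rw [mul_swap_symm, mul_swap_symm, hsa, hsb,
        Equiv.swap_apply_left, Equiv.swap_apply_right] at h1
      exact absurd h1 (not_lt.2 hkk1.le)
  · intro x y hadj
    rw [swap_dir_iff hkval (by exact hnadj) hadj]
    exact H x y hadj

lemma quot_eq {G : SimpleGraph (Fin n)} (π π' : Equiv.Perm (Fin n))
    (H : ∀ u v, G.Adj u v → (π.symm u < π.symm v ↔ π'.symm u < π'.symm v)) :
    Quot.mk (SwapRel G) π = Quot.mk (SwapRel G) π' := by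
  suffices h : ∀ (N : ℕ) (σ : Equiv.Perm (Fin n)), inv σ π' ≤ N →
      (∀ u v, G.Adj u v → (σ.symm u < σ.symm v ↔ π'.symm u < π'.symm v)) →
      Quot.mk (SwapRel G) σ = Quot.mk (SwapRel G) π' by
    exact h (inv π π') π le_rfl H
  intro N
  induction N with
  | zero =>
    intro σ hm _
    rw [eq_of_inv_zero (Nat.le_zero.1 hm)]
  | succ N ih =>
    intro σ hm Hσ
    by_cases h0 : inv σ π' = 0
    · rw [eq_of_inv_zero h0]
    · obtain ⟨σ₂, hrel, hlt, H₂⟩ := step Hσ h0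
      rw [Quot.sound hrel]
      exact ih σ₂ (by omega) H₂

lemma surj {G : SimpleGraph (Fin n)} (O : AcycGraphOrientation G) :
    ∃ π, permO G π = O := by
  classical
  let r : Fin n → Fin n → Prop := Relation.ReflGen (Relation.TransGen O.1.dir)
  haveI hpo : IsPartialOrder (Fin n) r := by
    refine { refl := fun a => Relation.ReflGen.refl, trans := ?_, antisymm := ?_ }
    · intro x y z h1 h2
      cases h1 with
      | refl => exact h2
      | single h1 =>
        cases h2 with
        | refl => exact Relation.ReflGen.single h1
        | single h2 => exact Relation.ReflGen.single (h1.trans h2)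
    · intro x y h1 h2
      cases h1 with
      | refl => rfl
      | single h1 =>
        cases h2 with
        | refl => rfl
        | single h2 => exact absurd (h1.trans h2) (O.2 x)
  obtain ⟨s, hlin, hrs⟩ := extend_partialOrder r
  haveI := hlin
  have htot : ∀ x y, s x y ∨ s y x := Std.Total.total
  have htrans : ∀ {x y z}, s x y → s y z → s x z := fun h1 h2 => Trans.trans h1 h2
  have hanti : ∀ {x y}, s x y → s y x → x = y := fun h1 h2 => Std.Antisymm.antisymm _ _ h1 h2
  have hbound : ∀ x : Fin n,
      (Finset.univ.filter fun y => s y x ∧ y ≠ x).card < n := by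
    intro x
    have hsub : (Finset.univ.filter fun y => s y x ∧ y ≠ x) ⊆ Finset.univ.erase x := by
      intro y hy
      simp only [Finset.mem_filter] at hy
      exact Finset.mem_erase.2 ⟨hy.2.2, Finset.mem_univ y⟩
    have := Finset.card_le_card hsub
    rw [Finset.card_erase_of_mem (Finset.mem_univ x), Finset.card_univ, Fintype.card_fin] at this
    have hn : 0 < n := x.pos
    omega
  let g : Fin n → Fin n := fun x => ⟨_, hbound x⟩
  have hgmono : ∀ {x y}, s x y → x ≠ y → g x < g y := by
    intro x y hxy hne
    rw [Fin.lt_def]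
    show (Finset.univ.filter fun z => s z x ∧ z ≠ x).card < (Finset.univ.filter fun z => s z y ∧ z ≠ y).card
    apply Finset.card_lt_card
    constructor
    · intro z hz
      simp only [Finset.mem_filter, Finset.mem_univ, true_and] at hz ⊢
      refine ⟨htrans hz.1 hxy, ?_⟩
      intro hzy
      subst hzy
      exact hne (hanti hxy hz.1)
    · intro hsub
      have hx : x ∈ Finset.univ.filter fun z => s z y ∧ z ≠ y := by
        simp only [Finset.mem_filter, Finset.mem_univ, true_and]
        exact ⟨hxy, hne⟩
      have := hsub hx
      simp only [Finset.mem_filter, Finset.mem_univ, true_and] at this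
      exact this.2 rfl
  have hginj : Function.Injective g := by
    intro x y hxy
    by_contra hne
    rcases htot x y with h | h
    · exact absurd (congrArg Fin.val hxy) (Nat.ne_of_lt (hgmono h hne))
    · exact absurd (congrArg Fin.val hxy.symm) (Nat.ne_of_lt (hgmono h (Ne.symm hne)))
  have hbij : Function.Bijective g := Finite.injective_iff_bijective.1 hginj
  refine ⟨(Equiv.ofBijective g hbij).symm, ?_⟩
  apply Subtype.ext
  apply orient_ext
  intro u v
  have hsymm : ∀ w, ((Equiv.ofBijective g hbij).symm).symm w = g w := fun w => rfl
  show G.Adj u v ∧ _ < _ ↔ O.1.dir u v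
  rw [hsymm, hsymm]
  constructor
  · rintro ⟨hadj, hlt⟩
    rcases (O.1.consistent u v).1 hadj with h | h
    · exact h
    · exfalso
      have hsvu : s v u := hrs _ _ (Relation.ReflGen.single (Relation.TransGen.single h))
      have := hgmono hsvu (G.ne_of_adj hadj).symm
      exact absurd hlt (not_lt.2 this.le)
  · intro hdir
    have hadj : G.Adj u v := (O.1.consistent u v).2 (Or.inl hdir)
    have hsuv : s u v := hrs _ _ (Relation.ReflGen.single (Relation.TransGen.single hdir))
    exact ⟨hadj, hgmono hsuv (G.ne_of_adj hadj)⟩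

/-- the induced map on the quotient. -/
def toOrient (G : SimpleGraph (Fin n)) : Quot (SwapRel G) → AcycGraphOrientation G :=
  Quot.lift (permO G) (fun _ _ h => (permO_swap h).symm)

lemma toOrient_inj {G : SimpleGraph (Fin n)} : Function.Injective (toOrient G) := by
  intro x y
  induction x using Quot.ind with | _ π =>
  induction y using Quot.ind with | _ π' =>
  intro h
  apply quot_eq
  intro u v hadj
  have hd := congrArg (fun O : AcycGraphOrientation G => O.1.dir u v) h
  constructor
  · intro hlt
    exact ((iff_of_eq hd).1 ⟨hadj, hlt⟩).2
  · intro hlt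
    exact ((iff_of_eq hd).2 ⟨hadj, hlt⟩).2

lemma toOrient_surj {G : SimpleGraph (Fin n)} : Function.Surjective (toOrient G) := by
  intro O
  obtain ⟨π, hπ⟩ := surj O
  exact ⟨Quot.mk _ π, hπ⟩

end UpdateBij

theorem update_classes_biject_acyclic_orientations {n : ℕ} (G : SimpleGraph (Fin n)) :
    ∃ e : Quot (SwapRel G) ≃ AcycGraphOrientation G,
      ∀ π : Equiv.Perm (Fin n),
        ((e (Quot.mk _ π)).1.dir) = fun u v => G.Adj u v ∧ π.symm u < π.symm v := by
  refine ⟨Equiv.ofBijective (UpdateBij.toOrient G)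
    ⟨UpdateBij.toOrient_inj, UpdateBij.toOrient_surj⟩, fun π => rfl⟩
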